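/- Let v ≡ 3 (mod 4) be a positive integer such that none of the following three conditions holds: (i) v ≡ 3 (mod 12) and v = 3^{2a}·v₁ for some integer a ≥ 1 and some positive integer v₁ not divisible by 3; (ii) v ≡ 15 (mod 36) and v is 3 times a product of pairwise distinct primes each congruent to ±3 modulo 8; (iii) v ≡ 7 or 11 (mod 12) and v is a product of pairwise distinct primes each congruent to ±3 modulo 8. Then: if v ≡ 3 (mod 12), there exist integers α, β, both not divisible by v, such that 2α² − β² ≡ v/3 (mod v); and if v ≡ 7 or 11 (mod 12), there exist integers α, β, both not divisible by v, such that 2α² − β² ≡ 0 (mod v). -/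

import Mathlib

-- square root of 2 mod p
lemma sq2_prime (p : ℕ) (hp : p.Prime) (hp8 : p % 8 = 1 ∨ p % 8 = 7) :
    ∃ s : ℤ, (p:ℤ) ∣ s^2 - 2 := by
  haveI : Fact p.Prime := ⟨hp⟩
  have hp2 : p ≠ 2 := by rintro rfl; omega
  obtain ⟨y, hy⟩ := (ZMod.exists_sq_eq_two_iff (p := p) hp2).2 hp8
  refine ⟨(y.val : ℤ), ?_⟩
  rw [← ZMod.intCast_zmod_eq_zero_iff_dvd]
  push_cast
  rw [ZMod.natCast_val, ZMod.cast_id]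
  rw [hy]; ring

lemma sq2_pow (p : ℕ) (hp : p.Prime) (hp2 : p ≠ 2) (h1 : ∃ s : ℤ, (p:ℤ) ∣ s^2 - 2) :
    ∀ k : ℕ, ∃ s : ℤ, (p:ℤ)^(k+1) ∣ s^2 - 2 := by
  haveI : Fact p.Prime := ⟨hp⟩
  intro k
  induction k with
  | zero => simpa using h1
  | succ k ih =>
    obtain ⟨s, d, hd⟩ := ih
    have hpd : ¬ (p:ℤ) ∣ 2*s := by
      intro hdvd
      rcases ((Nat.prime_iff_prime_int.1 hp).dvd_mul.1 hdvd) with h | h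
      · have : (p:ℤ) ≤ 2 := Int.le_of_dvd (by norm_num) h
        have : 2 ≤ p := hp.two_le
        omega
      · have hs2 : (p:ℤ) ∣ s^2 - 2 := by
          calc (p:ℤ) ∣ (p:ℤ)^(k+1) := dvd_pow_self _ (Nat.succ_ne_zero k)
          _ ∣ _ := ⟨d, hd⟩
        have hss : (p:ℤ) ∣ s^2 := by rw [sq]; exact h.mul_left s
        have h2 : (p:ℤ) ∣ 2 := by
          have := dvd_sub hss hs2; simpa using this
        have : (p:ℤ) ≤ 2 := Int.le_of_dvd (by norm_num) h2
        have : 2 ≤ p := hp.two_le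
        omega
    have hs0 : ((2*s : ℤ) : ZMod p) ≠ 0 := by
      rwa [Ne, ZMod.intCast_zmod_eq_zero_iff_dvd]
    have hs0' : (2:ZMod p)*(s:ZMod p) ≠ 0 := by
      have h2s : ((2:ZMod p)*(s:ZMod p)) = ((2*s : ℤ) : ZMod p) := by push_cast; ring
      rw [h2s]; exact hs0
    set cz : ZMod p := (-(d : ZMod p)) * ((2:ZMod p)*(s:ZMod p))⁻¹ with hcz
    have hkey : (p:ℤ) ∣ d + 2*s*(cz.val : ℤ) := by
      rw [← ZMod.intCast_zmod_eq_zero_iff_dvd]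
      push_cast
      rw [ZMod.natCast_val, ZMod.cast_id]
      rw [hcz]
      have hsne : (s:ZMod p) ≠ 0 := right_ne_zero_of_mul hs0'
      have h2ne : (2:ZMod p) ≠ 0 := left_ne_zero_of_mul hs0'
      field_simp
      ring
    obtain ⟨e, he⟩ := hkey
    refine ⟨s + (cz.val : ℤ) * (p:ℤ)^(k+1), e + (cz.val : ℤ)^2 * (p:ℤ)^k, ?_⟩
    linear_combination hd + (p:ℤ)^(k+1) * he

lemma keyL (n : ℕ) (hn : 1 < n) (hodd : n % 2 = 1)
    (h : ∀ P : Finset ℕ, (∀ p ∈ P, Nat.Prime p ∧ (p % 8 = 3 ∨ p % 8 = 5)) → n ≠ ∏ p ∈ P, p) :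
    ∃ A B : ℤ, ¬((n:ℤ) ∣ A) ∧ ¬((n:ℤ) ∣ B) ∧ (n:ℤ) ∣ 2*A^2 - B^2 := by
  have hn0 : n ≠ 0 := by omega
  by_cases hsf : Squarefree n
  · -- squarefree: some prime factor is 1 or 7 mod 8
    have hex : ∃ p ∈ n.primeFactors, ¬(p % 8 = 3 ∨ p % 8 = 5) := by
      by_contra hc
      push_neg at hc
      exact h n.primeFactors
        (fun p hp => ⟨Nat.prime_of_mem_primeFactors hp, by
          rcases hc p hp with h' | h'
          · exact Or.inl h'
          · exact Or.inr h'⟩)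
        (Nat.prod_primeFactors_of_squarefree hsf).symm
    obtain ⟨p, hpmem, hp8'⟩ := hex
    have hp := Nat.prime_of_mem_primeFactors hpmem
    have hpdvd := Nat.dvd_of_mem_primeFactors hpmem
    have hp2 : p ≠ 2 := by
      rintro rfl
      obtain ⟨t, ht⟩ := hpdvd
      omega
    have hpodd : p % 2 = 1 := by
      rcases Nat.Prime.eq_two_or_odd hp with h' | h'
      · exact absurd h' hp2
      · exact h'
    have hp8 : p % 8 = 1 ∨ p % 8 = 7 := by
      have h2 : p % 8 % 2 = p % 2 := Nat.mod_mod_of_dvd p (by norm_num)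
      omega
    set k := n.factorization p with hk
    have hk1 : 1 ≤ k := (Nat.Prime.factorization_pos_of_dvd hp hn0 hpdvd)
    set w := ordCompl[p] n with hw
    have hnw : p^k * w = n := Nat.ordProj_mul_ordCompl_eq_self n p
    have hpw : ¬ p ∣ w := Nat.not_dvd_ordCompl hp hn0
    have hw0 : 0 < w := Nat.ordCompl_pos p hn0
    obtain ⟨s, hs⟩ := sq2_pow p hp hp2 (sq2_prime p hp hp8) (k-1)
    rw [Nat.sub_add_cancel hk1] at hs
    have hps : (p:ℤ) ∣ s^2 - 2 := dvd_trans (dvd_pow_self _ (by omega)) hs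
    refine ⟨(w:ℤ), s * (w:ℤ), ?_, ?_, ?_⟩
    · intro hdvd
      have : (n:ℕ) ∣ w := Int.ofNat_dvd.1 hdvd
      exact hpw (dvd_trans hpdvd this)
    · intro hdvd
      have hpz : (p:ℤ) ∣ s * w := dvd_trans (Int.ofNat_dvd.2 hpdvd) hdvd
      rcases ((Nat.prime_iff_prime_int.1 hp).dvd_mul.1 hpz) with h' | h'
      · have hss : (p:ℤ) ∣ s^2 := by rw [sq]; exact h'.mul_left s
        have h2 : (p:ℤ) ∣ 2 := by have := dvd_sub hss hps; simpa using this
        have : (p:ℤ) ≤ 2 := Int.le_of_dvd (by norm_num) h2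
        have : 2 ≤ p := hp.two_le
        omega
      · exact hpw (Int.ofNat_dvd.1 h')
    · have hco : IsCoprime ((p:ℤ)^k) (w:ℤ) := by
        have : Nat.Coprime (p^k) w := (Nat.coprime_ordCompl hp hn0).pow_left _
        have := Nat.isCoprime_iff_coprime.2 this
        push_cast at this
        exact this
      have hd1 : ((p:ℤ)^k) ∣ (w:ℤ)^2 * (s^2 - 2) := hs.mul_left _
      have hd2 : (w:ℤ) ∣ (w:ℤ)^2 * (s^2 - 2) := (dvd_pow_self _ two_ne_zero).mul_right _
      have hdn : ((p:ℤ)^k * (w:ℤ)) ∣ (w:ℤ)^2 * (s^2 - 2) := hco.mul_dvd hd1 hd2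
      have hne : ((p:ℤ)^k * (w:ℤ)) = (n:ℤ) := by exact_mod_cast congrArg (Nat.cast : ℕ → ℤ) hnw
      rw [hne] at hdn
      have heq : 2*(w:ℤ)^2 - (s*(w:ℤ))^2 = -((w:ℤ)^2 * (s^2 - 2)) := by ring
      rw [heq]
      exact hdn.neg_right
  · rw [Nat.squarefree_iff_prime_squarefree] at hsf
    push_neg at hsf
    obtain ⟨p, hp, t, ht⟩ := hsf
    have ht0 : 0 < t := by
      rcases Nat.eq_zero_or_pos t with rfl | h'
      · omega
      · exact h'
    have hp2 : 2 ≤ p := hp.two_le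
    refine ⟨((p*t : ℕ):ℤ), ((p*t : ℕ):ℤ), ?_, ?_, ?_⟩
    · intro hdvd
      have hle : (n:ℤ) ≤ ((p*t:ℕ):ℤ) := Int.le_of_dvd (by positivity) hdvd
      have : p*t < n := by rw [ht]; nlinarith
      omega
    · intro hdvd
      have hle : (n:ℤ) ≤ ((p*t:ℕ):ℤ) := Int.le_of_dvd (by positivity) hdvd
      have : p*t < n := by rw [ht]; nlinarith
      omega
    · refine ⟨(t:ℤ), ?_⟩
      have : (n:ℤ) = (p:ℤ)*(p:ℤ)*(t:ℤ) := by exact_mod_cast congrArg (Nat.cast : ℕ → ℤ) ht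
      rw [this]; push_cast; ring

theorem stmt5 (v : ℕ) (hv : v % 4 = 3)
    (h1 : ¬ (v % 12 = 3 ∧ ∃ a v₁ : ℕ, 1 ≤ a ∧ 0 < v₁ ∧ ¬ (3 ∣ v₁) ∧ v = 3 ^ (2 * a) * v₁))
    (h2 : ¬ (v % 36 = 15 ∧ ∃ P : Finset ℕ,
      (∀ p ∈ P, Nat.Prime p ∧ (p % 8 = 3 ∨ p % 8 = 5)) ∧ v = 3 * ∏ p ∈ P, p))
    (h3 : ¬ ((v % 12 = 7 ∨ v % 12 = 11) ∧ ∃ P : Finset ℕ,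
      (∀ p ∈ P, Nat.Prime p ∧ (p % 8 = 3 ∨ p % 8 = 5)) ∧ v = ∏ p ∈ P, p)) :
    (v % 12 = 3 → ∃ α β : ℤ, ¬ ((v : ℤ) ∣ α) ∧ ¬ ((v : ℤ) ∣ β) ∧
      2 * α ^ 2 - β ^ 2 ≡ ((v / 3 : ℕ) : ℤ) [ZMOD (v : ℤ)]) ∧
    ((v % 12 = 7 ∨ v % 12 = 11) → ∃ α β : ℤ, ¬ ((v : ℤ) ∣ α) ∧ ¬ ((v : ℤ) ∣ β) ∧
      2 * α ^ 2 - β ^ 2 ≡ 0 [ZMOD (v : ℤ)]) := by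
  have hv2 : v % 2 = 1 := by omega
  have hv0 : v ≠ 0 := by omega
  constructor
  · intro h12
    have h3v : 3 ∣ v := by omega
    have hprime3 : Nat.Prime 3 := by norm_num
    have hvem : 3^(v.factorization 3) * (ordCompl[3] v) = v :=
      Nat.ordProj_mul_ordCompl_eq_self v 3
    set e := v.factorization 3 with he
    set m := ordCompl[3] v with hm
    clear_value e m
    have hm3 : ¬ 3 ∣ m := by rw [hm]; exact Nat.not_dvd_ordCompl hprime3 hv0
    have he1 : 1 ≤ e := by rw [he]; exact Nat.Prime.factorization_pos_of_dvd hprime3 hv0 h3v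
    have hm0 : 0 < m := by rw [hm]; exact Nat.ordCompl_pos 3 hv0
    have heodd : e % 2 = 1 := by
      by_contra hev
      refine h1 ⟨h12, e/2, m, by omega, hm0, hm3, ?_⟩
      have h2e : 2*(e/2) = e := by omega
      rw [h2e]
      exact hvem.symm
    obtain ⟨r, her⟩ : ∃ r, e = 2*r + 1 := ⟨e/2, by omega⟩
    rw [her] at hvem
    have hveqz : (v:ℤ) = 3^(2*r+1) * m := by exact_mod_cast (congrArg (Nat.cast : ℕ → ℤ) hvem).symm
    have hv3 : v / 3 = 3^(2*r) * m := by
      rw [← hvem, pow_succ, mul_comm ((3:ℕ)^(2*r)) 3, mul_assoc]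
      exact Nat.mul_div_cancel_left _ (by norm_num)
    have hlt1 : 3^r * m < v := by
      rw [← hvem]
      have : (3:ℕ)^r < 3^(2*r+1) := Nat.pow_lt_pow_right (by norm_num) (by omega)
      exact Nat.mul_lt_mul_of_lt_of_le this (le_refl m) hm0
    have hm3mod : m % 3 = 1 ∨ m % 3 = 2 := by omega
    rcases hm3mod with hm1 | hm2
    · -- m ≡ 1 mod 3 : α = β = 3^r * m
      obtain ⟨c, hc⟩ : ∃ c, m = 3*c + 1 := ⟨m/3, by omega⟩
      have hmz : (m:ℤ) = 3*c+1 := by exact_mod_cast congrArg (Nat.cast : ℕ → ℤ) hc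
      refine ⟨((3^r * m : ℕ):ℤ), ((3^r * m : ℕ):ℤ), ?_, ?_, ?_⟩
      · intro hdvd
        have hle : (v:ℤ) ≤ ((3^r*m:ℕ):ℤ) := Int.le_of_dvd (by positivity) hdvd
        omega
      · intro hdvd
        have hle : (v:ℤ) ≤ ((3^r*m:ℕ):ℤ) := Int.le_of_dvd (by positivity) hdvd
        omega
      · rw [Int.modEq_iff_dvd, hv3]
        refine ⟨-(c:ℤ), ?_⟩
        push_cast
        rw [hveqz, hmz]
        ring
    · -- m ≡ 2 mod 3
      obtain ⟨d, hd⟩ : ∃ d, m = 3*d + 2 := ⟨m/3, by omega⟩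
      have hmz : (m:ℤ) = 3*d+2 := by exact_mod_cast congrArg (Nat.cast : ℕ → ℤ) hd
      rcases Nat.eq_zero_or_pos r with hr0 | hr1
      · -- e = 1 : hard case via keyL on m
        subst hr0
        have hveq1 : v = 3 * m := by
          have := hvem; norm_num at this; omega
        have hveq1z : (v:ℤ) = 3 * m := by exact_mod_cast congrArg (Nat.cast : ℕ → ℤ) hveq1
        have hv36 : v % 36 = 15 := by omega
        have hgood : ∀ P : Finset ℕ, (∀ p ∈ P, Nat.Prime p ∧ (p % 8 = 3 ∨ p % 8 = 5)) →
            m ≠ ∏ p ∈ P, p := by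
          intro P hP hEq
          exact h2 ⟨hv36, P, hP, by rw [hveq1, hEq]⟩
        have hmodd : m % 2 = 1 := by omega
        have hm1' : 1 < m := by omega
        obtain ⟨A, B, hA, hB, hAB⟩ := keyL m hm1' hmodd hgood
        refine ⟨A + 2*(m:ℤ)*(1-A), B*(1-2*(m:ℤ)), ?_, ?_, ?_⟩
        · intro hdvd
          have h3a : (3:ℤ) ∣ A + 2*(m:ℤ)*(1-A) :=
            dvd_trans ⟨(m:ℤ), hveq1z⟩ hdvd
          have hα : A + 2*(m:ℤ)*(1-A) = 1 - 3*((A-1)*(2*(d:ℤ)+1)) := by rw [hmz]; ring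
          rw [hα] at h3a
          have h31 : (3:ℤ) ∣ 1 := by
            have := h3a.add (dvd_mul_right (3:ℤ) ((A-1)*(2*(d:ℤ)+1)))
            simpa using this
          norm_num at h31
        · intro hdvd
          have hmb : (m:ℤ) ∣ B*(1-2*(m:ℤ)) :=
            dvd_trans ⟨3, by rw [hveq1z]; ring⟩ hdvd
          have hsub : (m:ℤ) ∣ B*(1-2*(m:ℤ)) - B := ⟨-2*B, by ring⟩
          have : (m:ℤ) ∣ B := by
            have := hmb.sub hsub
            simpa using this
          exact hB this
        · rw [Int.modEq_iff_dvd]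
          have hv3' : v / 3 = m := by omega
          rw [hv3']
          have h3X : (3:ℤ) ∣ (m:ℤ) - (2*(A + 2*(m:ℤ)*(1-A))^2 - (B*(1-2*(m:ℤ)))^2) := by
            refine ⟨(d:ℤ) + 4*((A-1)*(2*(d:ℤ)+1)) - 6*((A-1)*(2*(d:ℤ)+1))^2
              + 3*(-B*(2*(d:ℤ)+1))^2, ?_⟩
            rw [hmz]; ring
          have hma : (m:ℤ) ∣ (A + 2*(m:ℤ)*(1-A)) - A := ⟨2*(1-A), by ring⟩
          have hmbb : (m:ℤ) ∣ (B*(1-2*(m:ℤ))) - B := ⟨-2*B, by ring⟩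
          have hmX : (m:ℤ) ∣ (m:ℤ) - (2*(A + 2*(m:ℤ)*(1-A))^2 - (B*(1-2*(m:ℤ)))^2) := by
            have e1 : (m:ℤ) ∣ ((A + 2*(m:ℤ)*(1-A)) - A)*((A + 2*(m:ℤ)*(1-A)) + A) :=
              hma.mul_right _
            have e2 : (m:ℤ) ∣ ((B*(1-2*(m:ℤ))) - B)*((B*(1-2*(m:ℤ))) + B) :=
              hmbb.mul_right _
            have hXeq : (m:ℤ) - (2*(A + 2*(m:ℤ)*(1-A))^2 - (B*(1-2*(m:ℤ)))^2)
                = (m:ℤ)*1 - (2*A^2-B^2)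
                  - 2*(((A + 2*(m:ℤ)*(1-A)) - A)*((A + 2*(m:ℤ)*(1-A)) + A))
                  + ((B*(1-2*(m:ℤ))) - B)*((B*(1-2*(m:ℤ))) + B) := by ring
            rw [hXeq]
            exact (((dvd_mul_right _ _).sub hAB).sub (e1.mul_left 2)).add e2
          have hco : IsCoprime (3:ℤ) (m:ℤ) := by
            have hnatco : Nat.Coprime 3 m := (Nat.Prime.coprime_iff_not_dvd hprime3).2 hm3
            have := Nat.isCoprime_iff_coprime.2 hnatco
            simpa using this
          have := hco.mul_dvd h3X hmX
          rw [hveq1z]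
          exact this
      · -- r ≥ 1 : α = 3^r m, β = 3^(r+1) m
        have hlt2 : 3^(r+1) * m < v := by
          rw [← hvem]
          have : (3:ℕ)^(r+1) < 3^(2*r+1) := Nat.pow_lt_pow_right (by norm_num) (by omega)
          exact Nat.mul_lt_mul_of_lt_of_le this (le_refl m) hm0
        refine ⟨((3^r * m : ℕ):ℤ), ((3^(r+1) * m : ℕ):ℤ), ?_, ?_, ?_⟩
        · intro hdvd
          have hle : (v:ℤ) ≤ ((3^r*m:ℕ):ℤ) := Int.le_of_dvd (by positivity) hdvd
          omega
        · intro hdvd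
          have hle : (v:ℤ) ≤ ((3^(r+1)*m:ℕ):ℤ) := Int.le_of_dvd (by positivity) hdvd
          omega
        · rw [Int.modEq_iff_dvd, hv3]
          refine ⟨(7*(d:ℤ)+5), ?_⟩
          push_cast
          rw [hveqz, hmz]
          ring
  · intro h711
    have hgood : ∀ P : Finset ℕ, (∀ p ∈ P, Nat.Prime p ∧ (p % 8 = 3 ∨ p % 8 = 5)) →
        v ≠ ∏ p ∈ P, p := by
      intro P hP hEq
      exact h3 ⟨h711, P, hP, hEq⟩
    obtain ⟨A, B, hA, hB, hAB⟩ := keyL v (by omega) hv2 hgood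
    refine ⟨A, B, hA, hB, ?_⟩
    rw [Int.modEq_iff_dvd]
    simpa using hAB.neg_right
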